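/- Define (G₁ p)(X, S) = ∑_{i,j=1}^{n_s} ∑_{α=1}^{n_a} f_{ij}^{(α)}(X, S) p(X, S) with the second-order rate functions f_{ij}^{(α)}(X, S) = δ_i(s_α) ∑_{β ≠ α} δ_j(s_β) c_{ij} d_r(x_α, x_β). Then for all M, N ∈ M_{n_a}: ⟨Φ_M, G₁ Φ_N⟩ = ∑_{i,j=1}^{n_s} ∑_{k,l=1}^{m} c_{ij} b_{kl} N_i^{(k)} N_j^{(l)} ⟨Φ_N, Φ_N⟩ if M = N, and ⟨Φ_M, G₁ Φ_N⟩ = 0 if M ≠ N. -/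

import Mathlib

open MeasureTheory Finset Function

namespace ABMFormal

abbrev E (d : ℕ) : Type := EuclideanSpace ℝ (Fin d)
abbrev FS (d n_s n_a : ℕ) : Type := (Fin n_a → E d) → (Fin n_a → Fin n_s) → ℝ

noncomputable def occ {d m n_s n_a : ℕ} (A : Fin m → Set (E d)) (X : Fin n_a → E d)
    (S : Fin n_a → Fin n_s) (i : Fin n_s) (k : Fin m) : ℕ :=
  Set.ncard {α : Fin n_a | X α ∈ A k ∧ S α = i}

noncomputable def Phi {d m n_s n_a : ℕ} (A : Fin m → Set (E d)) (N : Fin n_s → Fin m → ℤ)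
    (X : Fin n_a → E d) (S : Fin n_a → Fin n_s) : ℝ :=
  if ∀ i k, ((occ A X S i k : ℕ) : ℤ) = N i k then 1 else 0

noncomputable def Mset (n_s m n_a : ℕ) : Finset (Fin n_s → Fin m → ℤ) :=
  ((Finset.univ : Finset (Fin n_s → Fin m → Fin (n_a + 1))).image
      fun f i k => ((f i k : ℕ) : ℤ)).filter
    fun N => (∑ i, ∑ k, N i k) = (n_a : ℤ)

def posSet {d : ℕ} (Xdom : Set (E d)) (n_a : ℕ) : Set (Fin n_a → E d) :=
  Set.univ.pi fun _ => Xdom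

noncomputable def ip {d n_s n_a : ℕ} (Xdom : Set (E d)) (f g : FS d n_s n_a) : ℝ :=
  (((volume Xdom).toReal * (n_s : ℝ)) ^ n_a)⁻¹ *
    ∑ S : Fin n_a → Fin n_s, ∫ X in posSet Xdom n_a, f X S * g X S

def one (d n_s n_a : ℕ) : FS d n_s n_a := fun _ _ => 1

def Emat {n_s m : ℕ} (i : Fin n_s) (k : Fin m) : Fin n_s → Fin m → ℤ :=
  fun i' k' => if i' = i ∧ k' = k then 1 else 0

def deltaS {n_s : ℕ} (i s : Fin n_s) : ℝ := if s = i then 1 else 0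

noncomputable def deltaA {d : ℕ} (A : Set (E d)) (x : E d) : ℝ :=
  A.indicator (fun _ => (1 : ℝ)) x

noncomputable def dr {d : ℕ} (r : ℝ) (x y : E d) : ℝ := if dist x y ≤ r then 1 else 0

/-- Transition rates `λ_i^{(kl)} = (∫_{A_l} ∫_{A_k} ℓ_i(x,y) dy dx) / μ(A_k)`. -/
noncomputable def lam {d m n_s : ℕ} (A : Fin m → Set (E d)) (K : Fin n_s → E d → E d → ℝ)
    (i : Fin n_s) (k l : Fin m) : ℝ :=
  (∫ x in A l, ∫ y in A k, K i x y) / (volume (A k)).toReal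

/-- The movement generator `(L p)(X, S) = ∑_α ∫_X ℓ_{s_α}(x_α, y) p(X^{α→y}, S) dy`. -/
noncomputable def Lop {d n_s n_a : ℕ} (Xdom : Set (E d)) (K : Fin n_s → E d → E d → ℝ)
    (p : FS d n_s n_a) : FS d n_s n_a :=
  fun X S => ∑ α, ∫ y in Xdom, K (S α) (X α) y * p (Function.update X α y) S

/-- `γ_{ij}^{(k)} = (∫_{A_k} γ_{ij}(x) dx) / μ(A_k)`. -/
noncomputable def gammaK {d m n_s : ℕ} (A : Fin m → Set (E d)) (γ : Fin n_s → Fin n_s → E d → ℝ)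
    (i j : Fin n_s) (k : Fin m) : ℝ :=
  (∫ x in A k, γ i j x) / (volume (A k)).toReal

/-- First-order adoption rate function `f_{ij}^{(α)}(X,S) = δ_i(s_α) γ_{ij}(x_α)`. -/
noncomputable def fFirst {d n_s n_a : ℕ} (γ : Fin n_s → Fin n_s → E d → ℝ) (i j : Fin n_s)
    (α : Fin n_a) (X : Fin n_a → E d) (S : Fin n_a → Fin n_s) : ℝ :=
  deltaS i (S α) * γ i j (X α)

/-- Outflow part `G₁ p = (∑_{i,j,α} f_{ij}^{(α)}) p` of the first-order adoption generator. -/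
noncomputable def G1First {d n_s n_a : ℕ} (γ : Fin n_s → Fin n_s → E d → ℝ)
    (p : FS d n_s n_a) : FS d n_s n_a :=
  fun X S => (∑ i, ∑ j, ∑ α, fFirst γ i j α X S) * p X S

/-- Inflow part `G₂ p (X,S) = ∑_{i,j,α} f_{ij}^{(α)}(X, S + i e_α − j e_α) p(X, S + i e_α − j e_α)`
of the first-order adoption generator.  Since in coordinatewise integer arithmetic
`δ_i(s_α + i − j) = δ_j(s_α)`, and then `S + i e_α − j e_α = Function.update S α i` lies in
`S^{n_a}`, while all other summands vanish by the extension-by-zero convention, the term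
equals `∑_{i,j,α} δ_j(s_α) γ_{ij}(x_α) p(X, update S α i)`. -/
noncomputable def G2First {d n_s n_a : ℕ} (γ : Fin n_s → Fin n_s → E d → ℝ)
    (p : FS d n_s n_a) : FS d n_s n_a :=
  fun X S => ∑ i, ∑ j, ∑ α, deltaS j (S α) * γ i j (X α) * p X (Function.update S α i)

/-- The first-order adoption generator `G = −G₁ + G₂`. -/
noncomputable def GopFirst {d n_s n_a : ℕ} (γ : Fin n_s → Fin n_s → E d → ℝ)
    (p : FS d n_s n_a) : FS d n_s n_a :=
  fun X S => -(G1First γ p X S) + G2First γ p X S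

/-- Second-order adoption rate function
`f_{ij}^{(α)}(X,S) = δ_i(s_α) ∑_{β ≠ α} δ_j(s_β) c_{ij} d_r(x_α, x_β)`. -/
noncomputable def fSecond {d n_s n_a : ℕ} (c : Fin n_s → Fin n_s → ℝ) (r : ℝ)
    (i j : Fin n_s) (α : Fin n_a) (X : Fin n_a → E d) (S : Fin n_a → Fin n_s) : ℝ :=
  deltaS i (S α) * ∑ β ∈ Finset.univ.erase α, deltaS j (S β) * (c i j * dr r (X α) (X β))

/-- Outflow part `G₁ p = (∑_{i,j,α} f_{ij}^{(α)}) p` of the second-order adoption generator. -/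
noncomputable def G1Second {d n_s n_a : ℕ} (c : Fin n_s → Fin n_s → ℝ) (r : ℝ)
    (p : FS d n_s n_a) : FS d n_s n_a :=
  fun X S => (∑ i, ∑ j, ∑ α, fSecond c r i j α X S) * p X S

/-- Inflow part of the second-order adoption generator, the term
`∑_{i,j,α} f_{ij}^{(α)}(X, S + i e_α − j e_α) p(X, S + i e_α − j e_α)`; as in the
first-order case the only non-vanishing summands are those with `s_α = j`, giving
`∑_{i,j,α} δ_j(s_α) (∑_{β ≠ α} δ_j(s_β) c_{ij} d_r(x_α,x_β)) p(X, update S α i)`. -/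
noncomputable def G2Second {d n_s n_a : ℕ} (c : Fin n_s → Fin n_s → ℝ) (r : ℝ)
    (p : FS d n_s n_a) : FS d n_s n_a :=
  fun X S => ∑ i, ∑ j, ∑ α, deltaS j (S α) *
    (∑ β ∈ Finset.univ.erase α, deltaS j (S β) * (c i j * dr r (X α) (X β))) *
    p X (Function.update S α i)

/-- The second-order adoption generator `G = −G₁ + G₂`. -/
noncomputable def GopSecond {d n_s n_a : ℕ} (c : Fin n_s → Fin n_s → ℝ) (r : ℝ)
    (p : FS d n_s n_a) : FS d n_s n_a :=
  fun X S => -(G1Second c r p X S) + G2Second c r p X S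

/-- `b_{kl} = (∫_{A_k} ∫_{A_l} d_r(x₁,x₂) dx₂ dx₁)/(μ(A_k) μ(A_l))`. -/
noncomputable def bOf {d m : ℕ} (A : Fin m → Set (E d)) (r : ℝ) (k l : Fin m) : ℝ :=
  (∫ x in A k, ∫ y in A l, dr r x y) / ((volume (A k)).toReal * (volume (A l)).toReal)

/-- The normalized ansatz functions `Φ̂_N = Φ_N / ⟨Φ_N, 𝟙⟩`. -/
noncomputable def Phihat {d m n_s n_a : ℕ} (Xdom : Set (E d)) (A : Fin m → Set (E d))
    (N : Fin n_s → Fin m → ℤ) : FS d n_s n_a :=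
  fun X S => Phi A N X S / ip Xdom (Phi (n_a := n_a) A N) (one d n_s n_a)

/-- The Galerkin projection `Q v = ∑_{N ∈ M_{n_a}} (⟨Φ_N, v⟩/⟨Φ_N, 𝟙⟩) Φ_N`. -/
noncomputable def Qproj {d m n_s n_a : ℕ} (Xdom : Set (E d)) (A : Fin m → Set (E d))
    (v : FS d n_s n_a) : FS d n_s n_a :=
  fun X S => ∑ N ∈ Mset n_s m n_a,
    (ip Xdom (Phi (n_a := n_a) A N) v / ip Xdom (Phi (n_a := n_a) A N) (one d n_s n_a)) *
      Phi A N X S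

/-- The matrix representation `Ĥ_{NM} = ⟨Φ_M, H Φ_N⟩ / ⟨Φ_N, 𝟙⟩` of a projected operator. -/
noncomputable def Hhat {d m n_s n_a : ℕ} (Xdom : Set (E d)) (A : Fin m → Set (E d))
    (H : FS d n_s n_a →ₗ[ℝ] FS d n_s n_a) (N M : Fin n_s → Fin m → ℤ) : ℝ :=
  ip Xdom (Phi (n_a := n_a) A M) (H (Phi A N)) / ip Xdom (Phi (n_a := n_a) A N) (one d n_s n_a)


/-! ### Auxiliary results for statement 13 -/

theorem single_aux {d : ℕ} (n : ℕ) (g : Fin n → E d → ℝ) (φ : E d → ℝ) (β : Fin n) :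
    ∫ Y : Fin n → E d, (∏ γ, g γ (Y γ)) * φ (Y β)
      = (∏ γ ∈ Finset.univ.erase β, ∫ v, g γ v) * ∫ v, g β v * φ v := by
  classical
  set h : Fin n → E d → ℝ := fun γ => if γ = β then fun v => g β v * φ v else g γ with hh
  have hsplit : ∀ (F : Fin n → ℝ), (∏ γ, F γ) = F β * ∏ γ ∈ Finset.univ.erase β, F γ :=
    fun F => (Finset.mul_prod_erase Finset.univ F (Finset.mem_univ β)).symm
  have hpt : ∀ Y : Fin n → E d, (∏ γ, g γ (Y γ)) * φ (Y β) = ∏ γ, h γ (Y γ) := by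
    intro Y
    rw [hsplit (fun γ => g γ (Y γ)), hsplit (fun γ => h γ (Y γ))]
    have h1 : h β (Y β) = g β (Y β) * φ (Y β) := by simp [hh]
    have h2 : ∏ γ ∈ Finset.univ.erase β, h γ (Y γ) = ∏ γ ∈ Finset.univ.erase β, g γ (Y γ) :=
      Finset.prod_congr rfl fun γ hγ => by simp [hh, (Finset.mem_erase.mp hγ).1]
    rw [h1, h2]; ring
  simp only [hpt]
  rw [integral_fintype_prod_volume_eq_prod h, hsplit (fun γ => ∫ v, h γ v)]
  have h1 : (∫ v, h β v) = ∫ v, g β v * φ v := by simp [hh]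
  have h2 : ∏ γ ∈ Finset.univ.erase β, (∫ v, h γ v) = ∏ γ ∈ Finset.univ.erase β, ∫ v, g γ v :=
    Finset.prod_congr rfl fun γ hγ => by simp [hh, (Finset.mem_erase.mp hγ).1]
  rw [h1, h2]; ring

theorem pair_aux {d : ℕ} (n : ℕ) (g : Fin n → E d → ℝ)
    (hgi : ∀ γ, Integrable (g γ)) (hgm : ∀ γ, Measurable (g γ))
    (f : E d → E d → ℝ) (hfm : Measurable (Function.uncurry f))
    (hfb : ∀ u v, |f u v| ≤ 1)
    (α β : Fin n) (hab : α ≠ β) :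
    ∫ X : Fin n → E d, (∏ γ, g γ (X γ)) * f (X α) (X β)
      = (∏ γ ∈ (Finset.univ.erase α).erase β, ∫ v, g γ v) *
          ∫ u, g α u * ∫ v, g β v * f u v := by
  classical
  cases n with
  | zero => exact α.elim0
  | succ n =>
    obtain ⟨β', hβ'⟩ := Fin.exists_succAbove_eq hab.symm
    set e := MeasurableEquiv.piFinSuccAbove (fun _ : Fin (n+1) => E d) α with he
    set H : E d × (Fin n → E d) → ℝ :=
      fun z => (g α z.1 * ∏ j, g (α.succAbove j) (z.2 j)) * f z.1 (z.2 β') with hH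
    have hcomp : ∀ X : Fin (n+1) → E d,
        (∏ γ, g γ (X γ)) * f (X α) (X β) = H (e X) := by
      intro X
      have h1 : (∏ γ, g γ (X γ)) = g α (X α) * ∏ j, g (α.succAbove j) (X (α.succAbove j)) :=
        Fin.prod_univ_succAbove (fun γ => g γ (X γ)) α
      have h2 : e X = (X α, fun j => X (α.succAbove j)) := rfl
      simp only [hH, h2]
      rw [hβ', h1]
    have hHm : Measurable H := by
      apply Measurable.mul
      · exact ((hgm α).comp measurable_fst).mul
          (Finset.measurable_prod _ fun j _ =>
            (hgm _).comp ((measurable_pi_apply j).comp measurable_snd))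
      · exact hfm.comp (measurable_fst.prodMk ((measurable_pi_apply β').comp measurable_snd))
    have hBnd : Integrable (fun z : E d × (Fin n → E d) =>
        |g α z.1| * ∏ j, |g (α.succAbove j) (z.2 j)|) (volume.prod volume) :=
      Integrable.mul_prod ((hgi α).abs) (Integrable.fintype_prod fun j => (hgi _).abs)
    have hHint : Integrable H (volume.prod volume) := by
      refine hBnd.mono hHm.aestronglyMeasurable (Filter.Eventually.of_forall fun z => ?_)
      have hb : |H z| ≤ |g α z.1| * ∏ j, |g (α.succAbove j) (z.2 j)| := by
        rw [hH]
        calc |(g α z.1 * ∏ j, g (α.succAbove j) (z.2 j)) * f z.1 (z.2 β')|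
            = |g α z.1| * |∏ j, g (α.succAbove j) (z.2 j)| * |f z.1 (z.2 β')| := by
              rw [abs_mul, abs_mul]
          _ ≤ |g α z.1| * |∏ j, g (α.succAbove j) (z.2 j)| * 1 := by
              apply mul_le_mul_of_nonneg_left (hfb _ _) (by positivity)
          _ = |g α z.1| * ∏ j, |g (α.succAbove j) (z.2 j)| := by
              rw [mul_one, Finset.abs_prod]
      rw [Real.norm_eq_abs, Real.norm_eq_abs]
      refine le_trans hb (le_of_eq (abs_of_nonneg (by positivity)).symm)
    have hmp := volume_preserving_piFinSuccAbove (fun _ : Fin (n+1) => E d) α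
    calc ∫ X : Fin (n+1) → E d, (∏ γ, g γ (X γ)) * f (X α) (X β)
        = ∫ X : Fin (n+1) → E d, H (e X) := by simp only [hcomp]
      _ = ∫ z, H z ∂((volume : Measure (E d)).prod volume) := by
          rw [← Measure.volume_eq_prod]
          exact hmp.integral_comp (MeasurableEquiv.measurableEmbedding e) H
      _ = ∫ u, ∫ y, H (u, y) := integral_prod H hHint
      _ = ∫ u, g α u * ((∏ j ∈ Finset.univ.erase β', ∫ v, g (α.succAbove j) v) *
            ∫ v, g β v * f u v) := by
          refine congrArg _ (funext fun u => ?_)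
          have hptH : ∀ y : Fin n → E d, H (u, y)
              = g α u * ((∏ j, g (α.succAbove j) (y j)) * f u (y β')) := by
            intro y; rw [hH]; ring
          simp only [hptH]
          rw [integral_const_mul, single_aux n (fun j => g (α.succAbove j)) (f u) β', hβ']
      _ = (∏ γ ∈ (Finset.univ.erase α).erase β, ∫ v, g γ v) *
            ∫ u, g α u * ∫ v, g β v * f u v := by
          have himg : ((Finset.univ.erase β').image α.succAbove)
              = (Finset.univ.erase α).erase β := by
            ext γ
            simp only [Finset.mem_image, Finset.mem_erase, Finset.mem_univ, and_true]
            constructor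
            · rintro ⟨j, hj, rfl⟩
              refine ⟨fun h => hj ?_, Fin.succAbove_ne α j⟩
              exact Fin.succAbove_right_injective (by rw [hβ', h])
            · rintro ⟨hγβ, hγα⟩
              obtain ⟨j, hj⟩ := Fin.exists_succAbove_eq hγα
              refine ⟨j, ?_, hj⟩
              rintro rfl
              exact hγβ (hj ▸ hβ' ▸ rfl)
          have hC : (∏ j ∈ Finset.univ.erase β', ∫ v, g (α.succAbove j) v)
              = ∏ γ ∈ (Finset.univ.erase α).erase β, ∫ v, g γ v := by
            rw [← himg, Finset.prod_image (fun x _ y _ h => Fin.succAbove_right_injective h)]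
          rw [← hC, ← integral_const_mul]
          refine congrArg _ (funext fun u => ?_)
          ring

/-- Occupation numbers of a cell assignment. -/
noncomputable def cnt {n_a m n_s : ℕ} (κ : Fin n_a → Fin m) (S : Fin n_a → Fin n_s)
    (i : Fin n_s) (k : Fin m) : ℕ :=
  Set.ncard {α : Fin n_a | κ α = k ∧ S α = i}

/-- Indicator that a cell assignment `κ` with statuses `S` realizes `N`. -/
noncomputable def c0 {n_a m n_s : ℕ} (N : Fin n_s → Fin m → ℤ) (κ : Fin n_a → Fin m)
    (S : Fin n_a → Fin n_s) : ℝ :=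
  if ∀ i k, ((cnt κ S i k : ℕ) : ℤ) = N i k then 1 else 0

theorem sum_rot {A B C : Type*} [Fintype A] [Fintype B] [Fintype C] (F : A → B → C → ℝ) :
    ∑ a : A, ∑ b : B, ∑ c : C, F a b c = ∑ c : C, ∑ a : A, ∑ b : B, F a b c := by
  have h1 : ∑ a : A, ∑ b : B, ∑ c : C, F a b c = ∑ a : A, ∑ c : C, ∑ b : B, F a b c :=
    Finset.sum_congr rfl fun a _ => Finset.sum_comm
  rw [h1]
  exact Finset.sum_comm

theorem Dlem {n_a m n_s : ℕ} (c : Fin n_s → Fin n_s → ℝ) (hcdiag : ∀ i, c i i = 0)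
    (b : Fin m → Fin m → ℝ) (N : Fin n_s → Fin m → ℤ)
    (κ : Fin n_a → Fin m) (S : Fin n_a → Fin n_s)
    (hcond : ∀ i k, ((cnt κ S i k : ℕ) : ℤ) = N i k) :
    ∑ i, ∑ j, ∑ α, ∑ β ∈ Finset.univ.erase α,
        (deltaS i (S α) * deltaS j (S β) * c i j) * b (κ α) (κ β)
      = ∑ i, ∑ j, ∑ k, ∑ l, c i j * b k l * (N i k : ℝ) * (N j l : ℝ) := by
  classical
  refine Finset.sum_congr rfl fun i _ => Finset.sum_congr rfl fun j _ => ?_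
  by_cases hij : i = j
  · subst hij
    simp [hcdiag i]
  · have hNR : ∀ (p : Fin n_s) (k : Fin m),
        (N p k : ℝ) = ∑ α, (if κ α = k ∧ S α = p then (1:ℝ) else 0) := by
      intro p k
      have h1 : ((cnt κ S p k : ℕ) : ℝ) = (N p k : ℝ) := by
        exact_mod_cast congrArg (fun z : ℤ => (z : ℝ)) (hcond p k)
      rw [← h1]
      unfold cnt
      rw [Set.ncard_eq_toFinset_card', Set.toFinset_setOf, Finset.sum_boole]
    have hdiag : ∀ α : Fin n_a,
        (deltaS i (S α) * deltaS j (S α) * c i j) * b (κ α) (κ α) = 0 := by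
      intro α
      by_cases h1 : S α = i
      · by_cases h2 : S α = j
        · exact absurd (h1.symm.trans h2) hij
        · simp [deltaS, h2]
      · simp [deltaS, h1]
    have herase : ∀ α : Fin n_a,
        ∑ β ∈ Finset.univ.erase α, (deltaS i (S α) * deltaS j (S β) * c i j) * b (κ α) (κ β)
          = ∑ β, (deltaS i (S α) * deltaS j (S β) * c i j) * b (κ α) (κ β) := by
      intro α
      rw [Finset.sum_erase_eq_sub (Finset.mem_univ α), hdiag α, sub_zero]
    simp only [herase]
    have hterm : ∀ (α β : Fin n_a),
        (deltaS i (S α) * deltaS j (S β) * c i j) * b (κ α) (κ β)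
          = ∑ k, ∑ l, ((if κ α = k ∧ S α = i then (1:ℝ) else 0) *
              (if κ β = l ∧ S β = j then (1:ℝ) else 0)) * (c i j * b k l) := by
      intro α β
      by_cases h1 : S α = i
      · by_cases h2 : S β = j
        · simp only [h1, h2, and_true]
          rw [Finset.sum_eq_single (κ α)]
          · rw [Finset.sum_eq_single (κ β)]
            · simp only [if_pos rfl, deltaS, h1, h2]
              ring
            · intro l _ hl; simp [Ne.symm hl]
            · intro h; exact absurd (Finset.mem_univ _) h
          · intro k _ hk
            simp [Ne.symm hk]
          · intro h; exact absurd (Finset.mem_univ _) h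
        · simp [deltaS, h2]
      · simp [deltaS, h1]
    simp only [hterm]
    rw [sum_rot (fun α β k => ∑ l, ((if κ α = k ∧ S α = i then (1:ℝ) else 0) *
        (if κ β = l ∧ S β = j then (1:ℝ) else 0)) * (c i j * b k l))]
    refine Finset.sum_congr rfl fun k _ => ?_
    rw [sum_rot (fun α β l => ((if κ α = k ∧ S α = i then (1:ℝ) else 0) *
        (if κ β = l ∧ S β = j then (1:ℝ) else 0)) * (c i j * b k l))]
    refine Finset.sum_congr rfl fun l _ => ?_
    rw [hNR i k, hNR j l, mul_assoc (c i j * b k l), Finset.sum_mul_sum]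
    simp only [Finset.mul_sum]
    exact (Finset.sum_congr rfl fun α _ => Finset.sum_congr rfl fun β _ => by ring).symm

set_option maxHeartbeats 2000000 in
/-- for the outflow part `G₁` of the second-order adoption generator,
`⟨Φ_M, G₁ Φ_N⟩ = ∑_{i,j} ∑_{k,l} c_{ij} b_{kl} N_i^{(k)} N_j^{(l)} ⟨Φ_N, Φ_N⟩` if
`M = N`, and `⟨Φ_M, G₁ Φ_N⟩ = 0` if `M ≠ N`. -/
theorem statement13 (d m n_s n_a : ℕ) (hns : 1 ≤ n_s) (hna : 1 ≤ n_a)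
    (Xdom : Set (E d)) (hXcomp : IsCompact Xdom) (hXpos : 0 < volume Xdom)
    (A : Fin m → Set (E d)) (hAmeas : ∀ k, MeasurableSet (A k))
    (hAdisj : Pairwise (Disjoint on A)) (hApos : ∀ k, 0 < volume (A k))
    (hAcover : (⋃ k, A k) = Xdom)
    (r : ℝ) (hr : 0 < r) (c : Fin n_s → Fin n_s → ℝ)
    (hc : ∀ i j, 0 ≤ c i j) (hcdiag : ∀ i, c i i = 0)
    (M N : Fin n_s → Fin m → ℤ)
    (hM : M ∈ Mset n_s m n_a) (hN : N ∈ Mset n_s m n_a) :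
    (M = N →
      ip Xdom (Phi (n_a := n_a) A M) (G1Second c r (Phi A N))
        = (∑ i : Fin n_s, ∑ j : Fin n_s, ∑ k : Fin m, ∑ l : Fin m,
              c i j * bOf A r k l * (N i k : ℝ) * (N j l : ℝ)) *
            ip Xdom (Phi (n_a := n_a) A N) (Phi A N)) ∧
    (M ≠ N → ip Xdom (Phi (n_a := n_a) A M) (G1Second c r (Phi A N)) = 0) := by
  classical
  have hXmeas : MeasurableSet Xdom := hXcomp.isClosed.measurableSet
  have hAsub : ∀ k, A k ⊆ Xdom := fun k => hAcover ▸ Set.subset_iUnion A k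
  have hAfin : ∀ k, volume (A k) ≠ ⊤ :=
    fun k => (lt_of_le_of_lt (measure_mono (hAsub k)) hXcomp.measure_lt_top).ne
  have hμpos : ∀ k, (0:ℝ) < (volume (A k)).toReal :=
    fun k => ENNReal.toReal_pos (hApos k).ne' (hAfin k)
  have hposm : MeasurableSet (posSet Xdom n_a) :=
    MeasurableSet.univ_pi fun _ => hXmeas
  have measDeltaA : ∀ k, Measurable (deltaA (A k)) := by
    intro k
    unfold deltaA
    exact measurable_const.indicator (hAmeas k)
  have intDeltaA : ∀ k, Integrable (deltaA (A k)) := by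
    intro k
    unfold deltaA
    exact (integrable_indicator_iff (hAmeas k)).mpr
      ((integrableOn_const_iff).mpr (Or.inr (hAfin k).lt_top))
  have hIdel : ∀ k, (∫ v, deltaA (A k) v) = (volume (A k)).toReal := by
    intro k
    unfold deltaA
    rw [MeasureTheory.integral_indicator_const (1:ℝ) (hAmeas k)]
    simp [Measure.real]
  have hdrm : Measurable (Function.uncurry (dr (d := d) r)) := by
    have hset : MeasurableSet {p : E d × E d | dist p.1 p.2 ≤ r} :=
      measurableSet_le (continuous_fst.dist continuous_snd).measurable measurable_const
    exact Measurable.ite hset measurable_const measurable_const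
  have hdrb : ∀ u v : E d, |dr r u v| ≤ 1 := by
    intro u v; unfold dr; split_ifs <;> norm_num
  have measBlock : ∀ κ : Fin n_a → Fin m,
      Measurable (fun X : Fin n_a → E d => ∏ γ, deltaA (A (κ γ)) (X γ)) :=
    fun κ => Finset.measurable_prod _ fun γ _ => (measDeltaA (κ γ)).comp (measurable_pi_apply γ)
  have intBlock : ∀ κ : Fin n_a → Fin m,
      Integrable (fun X : Fin n_a → E d => ∏ γ, deltaA (A (κ γ)) (X γ)) :=
    fun κ => Integrable.fintype_prod fun γ => intDeltaA (κ γ)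
  have measDr2 : ∀ α β : Fin n_a, Measurable (fun X : Fin n_a → E d => dr r (X α) (X β)) := by
    intro α β
    unfold dr
    exact Measurable.ite
      (measurableSet_le ((measurable_pi_apply α).dist (measurable_pi_apply β))
        measurable_const) measurable_const measurable_const
  have intBlockDr : ∀ (κ : Fin n_a → Fin m) (α β : Fin n_a),
      Integrable (fun X : Fin n_a → E d =>
        (∏ γ, deltaA (A (κ γ)) (X γ)) * dr r (X α) (X β)) := by
    intro κ α β
    refine (intBlock κ).mono (((measBlock κ).mul (measDr2 α β)).aestronglyMeasurable)
      (Filter.Eventually.of_forall fun X => ?_)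
    rw [Real.norm_eq_abs, Real.norm_eq_abs, abs_mul]
    calc |∏ γ, deltaA (A (κ γ)) (X γ)| * |dr r (X α) (X β)|
        ≤ |∏ γ, deltaA (A (κ γ)) (X γ)| * 1 :=
          mul_le_mul_of_nonneg_left (hdrb _ _) (abs_nonneg _)
      _ = _ := by rw [mul_one]
  have hBint : ∀ κ : Fin n_a → Fin m,
      (∫ X : Fin n_a → E d, ∏ γ, deltaA (A (κ γ)) (X γ))
        = ∏ γ, (volume (A (κ γ))).toReal := by
    intro κ
    rw [integral_fintype_prod_volume_eq_prod (fun γ => deltaA (A (κ γ)))]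
    exact Finset.prod_congr rfl fun γ _ => hIdel (κ γ)
  have hJr : ∀ k l : Fin m,
      (∫ u, deltaA (A k) u * ∫ v, deltaA (A l) v * dr r u v)
        = ∫ x in A k, ∫ y in A l, dr r x y := by
    intro k l
    have hv : ∀ u : E d, (∫ v, deltaA (A l) v * dr r u v) = ∫ y in A l, dr r u y := by
      intro u
      rw [← integral_indicator (hAmeas l)]
      refine congrArg _ (funext fun v => ?_)
      by_cases hvl : v ∈ A l <;> simp [deltaA, Set.indicator_apply, hvl]
    rw [← integral_indicator (hAmeas k)]
    refine congrArg _ (funext fun u => ?_)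
    rw [hv u]
    by_cases huk : u ∈ A k <;> simp [deltaA, Set.indicator_apply, huk]
  have hL4 : ∀ (κ : Fin n_a → Fin m) (α β : Fin n_a), α ≠ β →
      (∫ X : Fin n_a → E d, (∏ γ, deltaA (A (κ γ)) (X γ)) * dr r (X α) (X β))
        = (∏ γ, (volume (A (κ γ))).toReal) * bOf A r (κ α) (κ β) := by
    intro κ α β hab
    rw [pair_aux n_a (fun γ => deltaA (A (κ γ))) (fun γ => intDeltaA (κ γ))
      (fun γ => measDeltaA (κ γ)) (dr r) hdrm hdrb α β hab]
    have hIdels : ∏ γ ∈ (Finset.univ.erase α).erase β, (∫ v, deltaA (A (κ γ)) v)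
        = ∏ γ ∈ (Finset.univ.erase α).erase β, (volume (A (κ γ))).toReal :=
      Finset.prod_congr rfl fun γ _ => hIdel (κ γ)
    have hprod : ∏ γ : Fin n_a, (volume (A (κ γ))).toReal
        = (volume (A (κ α))).toReal * ((volume (A (κ β))).toReal *
            ∏ γ ∈ (Finset.univ.erase α).erase β, (volume (A (κ γ))).toReal) := by
      rw [← Finset.mul_prod_erase Finset.univ (fun γ => (volume (A (κ γ))).toReal)
        (Finset.mem_univ α),
        ← Finset.mul_prod_erase (Finset.univ.erase α) (fun γ => (volume (A (κ γ))).toReal)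
        (Finset.mem_erase.mpr ⟨Ne.symm hab, Finset.mem_univ β⟩)]
    rw [hIdels, hJr (κ α) (κ β), hprod]
    unfold bOf
    have h1 : (volume (A (κ α))).toReal ≠ 0 := (hμpos (κ α)).ne'
    have h2 : (volume (A (κ β))).toReal ≠ 0 := (hμpos (κ β)).ne'
    field_simp
  have occ_eq : ∀ (κ : Fin n_a → Fin m) (X : Fin n_a → E d),
      (∀ γ, X γ ∈ A (κ γ)) → ∀ (S' : Fin n_a → Fin n_s) (i : Fin n_s) (k : Fin m),
      occ A X S' i k = cnt κ S' i k := by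
    intro κ X hB S' i k
    unfold occ cnt
    congr 1
    ext α
    simp only [Set.mem_setOf_eq]
    constructor
    · rintro ⟨hx, hs⟩
      refine ⟨?_, hs⟩
      by_contra hne
      exact Set.disjoint_left.mp (hAdisj hne) (hB α) hx
    · rintro ⟨hk, hs⟩
      exact ⟨hk ▸ hB α, hs⟩
  have hPhiBlock : ∀ (κ : Fin n_a → Fin m) (X : Fin n_a → E d),
      (∀ γ, X γ ∈ A (κ γ)) → ∀ S' : Fin n_a → Fin n_s, Phi A N X S' = c0 N κ S' := by
    intro κ X hB S'
    unfold Phi c0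
    refine if_congr ?_ rfl rfl
    constructor
    · intro h i k; rw [← occ_eq κ X hB S' i k]; exact h i k
    · intro h i k; rw [occ_eq κ X hB S' i k]; exact h i k
  have hind : ∀ X : Fin n_a → E d, (if X ∈ posSet Xdom n_a then (1:ℝ) else 0)
      = ∑ κ : Fin n_a → Fin m, ∏ γ, deltaA (A (κ γ)) (X γ) := by
    intro X
    have h1 : (if X ∈ posSet Xdom n_a then (1:ℝ) else 0)
        = ∏ γ, Xdom.indicator (fun _ => (1:ℝ)) (X γ) := by
      by_cases hX : X ∈ posSet Xdom n_a
      · rw [if_pos hX]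
        exact (Finset.prod_eq_one fun γ _ =>
          Set.indicator_of_mem (hX γ (Set.mem_univ γ)) _).symm
      · rw [if_neg hX]
        have hex : ∃ γ, X γ ∉ Xdom := by
          by_contra hcon
          push_neg at hcon
          exact hX fun γ _ => hcon γ
        obtain ⟨γ0, hγ0⟩ := hex
        exact (Finset.prod_eq_zero (Finset.mem_univ γ0)
          (Set.indicator_of_notMem hγ0 _)).symm
    have h2 : ∀ x : E d, Xdom.indicator (fun _ => (1:ℝ)) x = ∑ k, deltaA (A k) x := by
      intro x
      by_cases hx : x ∈ Xdom
      · obtain ⟨k0, hk0⟩ : ∃ k, x ∈ A k := by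
          have hx' := hx
          rw [← hAcover] at hx'
          exact Set.mem_iUnion.mp hx'
        rw [Set.indicator_of_mem hx]
        rw [Finset.sum_eq_single k0]
        · unfold deltaA; rw [Set.indicator_of_mem hk0]
        · intro k _ hk
          have hxk : x ∉ A k := fun h => Set.disjoint_left.mp (hAdisj hk) h hk0
          unfold deltaA; exact Set.indicator_of_notMem hxk _
        · intro h; exact absurd (Finset.mem_univ _) h
      · rw [Set.indicator_of_notMem hx]
        refine (Finset.sum_eq_zero fun k _ => ?_).symm
        have hxk : x ∉ A k := fun h => hx (hAcover ▸ Set.mem_iUnion.mpr ⟨k, h⟩)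
        unfold deltaA; exact Set.indicator_of_notMem hxk _
    rw [h1]
    calc ∏ γ, Xdom.indicator (fun _ => (1:ℝ)) (X γ)
        = ∏ γ, ∑ k, deltaA (A k) (X γ) := Finset.prod_congr rfl fun γ _ => h2 (X γ)
      _ = ∑ κ ∈ Fintype.piFinset (fun _ : Fin n_a => (Finset.univ : Finset (Fin m))),
            ∏ γ, deltaA (A (κ γ)) (X γ) := Finset.prod_univ_sum _ _
      _ = ∑ κ : Fin n_a → Fin m, ∏ γ, deltaA (A (κ γ)) (X γ) := by
          rw [Fintype.piFinset_univ]
  have hptwise : ∀ (X : Fin n_a → E d) (S' : Fin n_a → Fin n_s) (t : ℝ),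
      (if X ∈ posSet Xdom n_a then Phi A N X S' * t * Phi A N X S' else 0)
        = ∑ κ : Fin n_a → Fin m, (c0 N κ S' * t) * ∏ γ, deltaA (A (κ γ)) (X γ) := by
    intro X S' t
    have h0 : (if X ∈ posSet Xdom n_a then Phi A N X S' * t * Phi A N X S' else 0)
        = (if X ∈ posSet Xdom n_a then (1:ℝ) else 0)
            * (Phi A N X S' * t * Phi A N X S') := by
      by_cases hX : X ∈ posSet Xdom n_a <;> simp [hX]
    rw [h0, hind X, Finset.sum_mul]
    refine Finset.sum_congr rfl fun κ _ => ?_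
    by_cases hB : ∀ γ, X γ ∈ A (κ γ)
    · have hB1 : (∏ γ, deltaA (A (κ γ)) (X γ)) = 1 :=
        Finset.prod_eq_one fun γ _ => by
          unfold deltaA; rw [Set.indicator_of_mem (hB γ)]
      rw [hB1, hPhiBlock κ X hB S']
      unfold c0
      by_cases hc : ∀ i k, ((cnt κ S' i k : ℕ) : ℤ) = N i k
      · rw [if_pos hc]; ring
      · rw [if_neg hc]; ring
    · have hB0 : (∏ γ, deltaA (A (κ γ)) (X γ)) = 0 := by
        push_neg at hB
        obtain ⟨γ0, hγ0⟩ := hB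
        exact Finset.prod_eq_zero (Finset.mem_univ γ0) (by
          unfold deltaA; exact Set.indicator_of_notMem hγ0 _)
      rw [hB0]; ring
  have hPF : ∀ (X : Fin n_a → E d) (S' : Fin n_a → Fin n_s),
      (∑ i, ∑ j, ∑ α, fSecond c r i j α X S')
        = ∑ i, ∑ j, ∑ α, ∑ β ∈ Finset.univ.erase α,
            (deltaS i (S' α) * deltaS j (S' β) * c i j) * dr r (X α) (X β) := by
    intro X S'
    refine Finset.sum_congr rfl fun i _ => Finset.sum_congr rfl fun j _ =>
      Finset.sum_congr rfl fun α _ => ?_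
    unfold fSecond
    rw [Finset.mul_sum]
    exact Finset.sum_congr rfl fun β _ => by ring
  have hA1 : ∀ S' : Fin n_a → Fin n_s,
      (∫ X in posSet Xdom n_a, Phi A N X S' * Phi A N X S')
        = ∑ κ : Fin n_a → Fin m, c0 N κ S' * ∏ γ, (volume (A (κ γ))).toReal := by
    intro S'
    rw [← integral_indicator hposm]
    have hpt : ∀ X : Fin n_a → E d,
        (posSet Xdom n_a).indicator (fun X => Phi A N X S' * Phi A N X S') X
          = ∑ κ : Fin n_a → Fin m, (c0 N κ S' * 1) * ∏ γ, deltaA (A (κ γ)) (X γ) := by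
      intro X
      rw [Set.indicator_apply, ← hptwise X S' 1]
      by_cases hX : X ∈ posSet Xdom n_a <;> simp [hX]
    rw [show ((posSet Xdom n_a).indicator fun X => Phi A N X S' * Phi A N X S')
        = fun X => ∑ κ : Fin n_a → Fin m, (c0 N κ S' * 1) * ∏ γ, deltaA (A (κ γ)) (X γ)
      from funext hpt]
    rw [integral_finset_sum _ fun κ _ => ((intBlock κ).const_mul _)]
    refine Finset.sum_congr rfl fun κ _ => ?_
    rw [integral_const_mul, hBint κ, mul_one]
  have hB1 : ∀ S' : Fin n_a → Fin n_s,
      (∫ X in posSet Xdom n_a, Phi A N X S' * G1Second c r (Phi A N) X S')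
        = (∑ i, ∑ j, ∑ k, ∑ l, c i j * bOf A r k l * (N i k : ℝ) * (N j l : ℝ)) *
            ∑ κ : Fin n_a → Fin m, c0 N κ S' * ∏ γ, (volume (A (κ γ))).toReal := by
    intro S'
    rw [← integral_indicator hposm]
    have hpt : ∀ X : Fin n_a → E d,
        (posSet Xdom n_a).indicator (fun X => Phi A N X S' * G1Second c r (Phi A N) X S') X
          = ∑ κ : Fin n_a → Fin m, ∑ i, ∑ j, ∑ α, ∑ β ∈ Finset.univ.erase α,
              (c0 N κ S' * (deltaS i (S' α) * deltaS j (S' β) * c i j)) *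
                ((∏ γ, deltaA (A (κ γ)) (X γ)) * dr r (X α) (X β)) := by
      intro X
      rw [Set.indicator_apply]
      have hg1 : Phi A N X S' * G1Second c r (Phi A N) X S'
          = Phi A N X S' * (∑ i, ∑ j, ∑ α, fSecond c r i j α X S') * Phi A N X S' := by
        unfold G1Second; ring
      rw [hg1, hptwise X S' (∑ i, ∑ j, ∑ α, fSecond c r i j α X S')]
      refine Finset.sum_congr rfl fun κ _ => ?_
      rw [hPF X S']
      simp only [Finset.mul_sum, Finset.sum_mul]
      refine Finset.sum_congr rfl fun i _ => Finset.sum_congr rfl fun j _ =>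
        Finset.sum_congr rfl fun α _ => Finset.sum_congr rfl fun β _ => by ring
    rw [show ((posSet Xdom n_a).indicator fun X =>
          Phi A N X S' * G1Second c r (Phi A N) X S')
        = fun X => ∑ κ : Fin n_a → Fin m, ∑ i, ∑ j, ∑ α, ∑ β ∈ Finset.univ.erase α,
              (c0 N κ S' * (deltaS i (S' α) * deltaS j (S' β) * c i j)) *
                ((∏ γ, deltaA (A (κ γ)) (X γ)) * dr r (X α) (X β))
      from funext hpt]
    rw [integral_finset_sum _ fun κ _ => integrable_finset_sum _ fun i _ =>
      integrable_finset_sum _ fun j _ => integrable_finset_sum _ fun α _ =>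
        integrable_finset_sum _ fun β _ => ((intBlockDr κ α β).const_mul _)]
    rw [Finset.mul_sum]
    refine Finset.sum_congr rfl fun κ _ => ?_
    calc (∫ X : Fin n_a → E d, ∑ i, ∑ j, ∑ α, ∑ β ∈ Finset.univ.erase α,
            (c0 N κ S' * (deltaS i (S' α) * deltaS j (S' β) * c i j)) *
              ((∏ γ, deltaA (A (κ γ)) (X γ)) * dr r (X α) (X β)))
        = ∑ i, ∑ j, ∑ α, ∑ β ∈ Finset.univ.erase α,
            (c0 N κ S' * (deltaS i (S' α) * deltaS j (S' β) * c i j)) *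
              ((∏ γ, (volume (A (κ γ))).toReal) * bOf A r (κ α) (κ β)) := by
          rw [integral_finset_sum _ fun i _ => integrable_finset_sum _ fun j _ =>
            integrable_finset_sum _ fun α _ => integrable_finset_sum _ fun β _ =>
              ((intBlockDr κ α β).const_mul _)]
          refine Finset.sum_congr rfl fun i _ => ?_
          rw [integral_finset_sum _ fun j _ => integrable_finset_sum _ fun α _ =>
            integrable_finset_sum _ fun β _ => ((intBlockDr κ α β).const_mul _)]
          refine Finset.sum_congr rfl fun j _ => ?_
          rw [integral_finset_sum _ fun α _ => integrable_finset_sum _ fun β _ =>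
            ((intBlockDr κ α β).const_mul _)]
          refine Finset.sum_congr rfl fun α _ => ?_
          rw [integral_finset_sum _ fun β _ => ((intBlockDr κ α β).const_mul _)]
          refine Finset.sum_congr rfl fun β hβ => ?_
          rw [integral_const_mul, hL4 κ α β (Ne.symm (Finset.mem_erase.mp hβ).1)]
      _ = (∑ i, ∑ j, ∑ k, ∑ l, c i j * bOf A r k l * (N i k : ℝ) * (N j l : ℝ)) *
            (c0 N κ S' * ∏ γ, (volume (A (κ γ))).toReal) := by
          by_cases hc : ∀ i k, ((cnt κ S' i k : ℕ) : ℤ) = N i k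
          · have hc1 : c0 N κ S' = 1 := if_pos hc
            simp only [hc1, one_mul]
            rw [← Dlem c hcdiag (bOf A r) N κ S' hc]
            simp only [Finset.sum_mul]
            refine Finset.sum_congr rfl fun i _ => Finset.sum_congr rfl fun j _ =>
              Finset.sum_congr rfl fun α _ => Finset.sum_congr rfl fun β _ => by ring
          · have hc0 : c0 N κ S' = 0 := if_neg hc
            simp [hc0]
  constructor
  · intro hMN
    subst hMN
    unfold ip
    have hSint : ∀ S' : Fin n_a → Fin n_s,
        (∫ X in posSet Xdom n_a, Phi A M X S' * G1Second c r (Phi A M) X S')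
          = (∑ i, ∑ j, ∑ k, ∑ l, c i j * bOf A r k l * (M i k : ℝ) * (M j l : ℝ)) *
              ∫ X in posSet Xdom n_a, Phi A M X S' * Phi A M X S' := by
      intro S'
      rw [hB1 S', hA1 S']
    simp only [hSint]
    rw [← Finset.mul_sum]
    ring
  · intro hMN
    have hzero : ∀ (S' : Fin n_a → Fin n_s) (X : Fin n_a → E d),
        Phi A M X S' * G1Second c r (Phi A N) X S' = 0 := by
      intro S' X
      unfold G1Second Phi
      by_cases h1 : ∀ i k, ((occ A X S' i k : ℕ) : ℤ) = M i k
      · by_cases h2 : ∀ i k, ((occ A X S' i k : ℕ) : ℤ) = N i k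
        · exact absurd (funext fun i => funext fun k =>
            (h1 i k).symm.trans (h2 i k)) hMN
        · rw [if_neg h2]; ring
      · rw [if_neg h1]; ring
    unfold ip
    simp only [hzero, integral_zero, Finset.sum_const_zero, mul_zero]


end ABMFormal
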